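/- For every positive integer m, with a = 6m − 1, the identity Σ_{s=1}^{a−1} s·⌈(m+1)(a−s)/m⌉ = C(a+1, 3) + Σ_{k=1}^{6} C(km − 1, 2) holds, where ⌈·⌉ is the ceiling function and C(·,·) the binomial coefficient. -/
import Mathlib
open Finset

lemma choose2 (n : ℕ) : 2 * n.choose 2 = n * (n - 1) := by
  induction n with
  | zero => rfl
  | succ k ih =>
    rw [Nat.choose_succ_succ, Nat.choose_one_right, Nat.mul_add, ih]
    rcases k with _ | k
    · rfl
    · simp only [Nat.add_sub_cancel]; ring

lemma choose3 (n : ℕ) : 6 * n.choose 3 = n * (n - 1) * (n - 2) := by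
  induction n with
  | zero => rfl
  | succ k ih =>
    have h2 : 6 * k.choose 2 = 3 * (k * (k-1)) := by
      rw [show (6:ℕ)*k.choose 2 = 3*(2*k.choose 2) by ring, choose2]
    rw [Nat.choose_succ_succ, Nat.mul_add, ih, h2]
    rcases k with _ | _ | k
    · rfl
    · rfl
    · simp only [Nat.add_sub_cancel, show k+1+1+1-2 = k+1 by omega, show k+1+1-2 = k by omega]
      ring

lemma sumquad (A B C : ℤ) (n : ℕ) :
    6 * ∑ r ∈ Finset.range n, (A + B * r + C * r^2)
      = 6*A*n + 3*B*n*(n-1) + C*n*(n-1)*(2*n-1) := by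
  induction n with
  | zero => simp
  | succ k ih =>
    rw [Finset.sum_range_succ, Nat.cast_succ, mul_add, ih]
    ring

lemma main (M : ℕ) :
    (∑ s ∈ Finset.Icc 1 (6 * (M+2) - 1 - 1), s * ((((M+2) + 1) * (6 * (M+2) - 1 - s) + ((M+2) - 1)) / (M+2))) =
      (6 * (M+2) - 1 + 1).choose 3 + ∑ k ∈ Finset.Icc 1 6, (k * (M+2) - 1).choose 2 := by
  simp only [show 6*(M+2)-1-1 = 6*M+10 by omega, show (M+2)+1 = M+3 by omega,
    show (M+2)-1 = M+1 by omega, show 6*(M+2)-1+1 = 6*M+12 by omega,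
    show ∀ s, 6*(M+2)-1-s = 6*M+11-s from fun s => by omega]
  -- Step A
  have hA : (∑ s ∈ Finset.Icc 1 (6*M+10), s * (((M + 3) * (6*M+11 - s) + (M + 1)) / (M+2))) =
      ∑ i ∈ Finset.range (6*M+12), (6*M+10 - i) * (i + 2 + i/(M+2)) := by
    rw [show 6*M+12 = (6*M+10)+1+1 by ring, Finset.sum_range_succ, Finset.sum_range_succ,
      show 6*M+10 - (6*M+10) = 0 by omega, show 6*M+10 - (6*M+10+1) = 0 by omega]
    simp only [Nat.zero_mul, Nat.add_zero]
    rw [← Finset.Ico_add_one_right_eq_Icc, Finset.sum_Ico_eq_sum_range]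
    simp only [show 6*M+10+1-1 = 6*M+10 by omega]
    rw [← Finset.sum_range_reflect]
    apply Finset.sum_congr rfl
    intro i hi
    rw [Finset.mem_range] at hi
    rw [show 1 + (6*M+10-1-i) = 6*M+10-i by omega, show 6*M+11 - (6*M+10-i) = i+1 by omega,
      show (M+3)*(i+1)+(M+1) = i + (i+2)*(M+2) by ring,
      Nat.add_mul_div_right _ _ (show 0 < M+2 by omega)]
    ring
  rw [hA]
  -- Step B: split into six blocks
  have hB : ∑ i ∈ Finset.range (6*M+12), (6*M+10 - i) * (i + 2 + i/(M+2)) =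
      (∑ x ∈ range (M+2), (6*M+10 - x) * (x + 2 + x/(M+2)))
      + (∑ x ∈ range (M+2), (6*M+10 - ((M+2)+x)) * (((M+2)+x) + 2 + ((M+2)+x)/(M+2)))
      + (∑ x ∈ range (M+2), (6*M+10 - ((M+2)+(M+2)+x)) * (((M+2)+(M+2)+x) + 2 + ((M+2)+(M+2)+x)/(M+2)))
      + (∑ x ∈ range (M+2), (6*M+10 - ((M+2)+(M+2)+(M+2)+x)) * (((M+2)+(M+2)+(M+2)+x) + 2 + ((M+2)+(M+2)+(M+2)+x)/(M+2)))
      + (∑ x ∈ range (M+2), (6*M+10 - ((M+2)+(M+2)+(M+2)+(M+2)+x)) * (((M+2)+(M+2)+(M+2)+(M+2)+x) + 2 + ((M+2)+(M+2)+(M+2)+(M+2)+x)/(M+2)))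
      + (∑ x ∈ range (M+2), (6*M+10 - ((M+2)+(M+2)+(M+2)+(M+2)+(M+2)+x)) * (((M+2)+(M+2)+(M+2)+(M+2)+(M+2)+x) + 2 + ((M+2)+(M+2)+(M+2)+(M+2)+(M+2)+x)/(M+2))) := by
    rw [show 6*M+12 = ((M+2)+(M+2)+(M+2)+(M+2)+(M+2))+(M+2) by ring, Finset.sum_range_add,
      show (M+2)+(M+2)+(M+2)+(M+2)+(M+2) = ((M+2)+(M+2)+(M+2)+(M+2))+(M+2) by ring, Finset.sum_range_add,
      show (M+2)+(M+2)+(M+2)+(M+2) = ((M+2)+(M+2)+(M+2))+(M+2) by ring, Finset.sum_range_add,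
      show (M+2)+(M+2)+(M+2) = ((M+2)+(M+2))+(M+2) by ring, Finset.sum_range_add,
      Finset.sum_range_add]
  rw [hB]
  -- cast blocks to ℤ polynomials
  have hB0 : (((∑ x ∈ range (M+2), (6*M+10 - x) * (x + 2 + x/(M+2))) : ℕ) : ℤ)
      = ∑ x ∈ range (M+2), ((12*(M:ℤ)+20) + (6*(M:ℤ)+8) * (x:ℤ) + (-1) * (x:ℤ)^2) := by
    rw [Nat.cast_sum]
    apply Finset.sum_congr rfl
    intro x hx
    rw [Finset.mem_range] at hx
    rw [Nat.div_eq_of_lt hx, Nat.cast_mul, Nat.cast_sub (by omega)]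
    push_cast
    ring
  have hB1 : (((∑ x ∈ range (M+2), (6*M+10 - ((M+2)+x)) * (((M+2)+x) + 2 + ((M+2)+x)/(M+2))) : ℕ) : ℤ)
      = ∑ x ∈ range (M+2), ((5*(M:ℤ)^2+33*(M:ℤ)+40) + (4*(M:ℤ)+3) * (x:ℤ) + (-1) * (x:ℤ)^2) := by
    rw [Nat.cast_sum]
    apply Finset.sum_congr rfl
    intro x hx
    rw [Finset.mem_range] at hx
    rw [show (M+2)+x = x + 1*(M+2) by ring,
      Nat.add_mul_div_right _ _ (show 0 < M+2 by omega), Nat.div_eq_of_lt hx,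
      Nat.cast_mul, Nat.cast_sub (by omega)]
    push_cast
    ring
  have hB2 : (((∑ x ∈ range (M+2), (6*M+10 - ((M+2)+(M+2)+x)) * (((M+2)+(M+2)+x) + 2 + ((M+2)+(M+2)+x)/(M+2))) : ℕ) : ℤ)
      = ∑ x ∈ range (M+2), ((8*(M:ℤ)^2+44*(M:ℤ)+48) + (2*(M:ℤ)-2) * (x:ℤ) + (-1) * (x:ℤ)^2) := by
    rw [Nat.cast_sum]
    apply Finset.sum_congr rfl
    intro x hx
    rw [Finset.mem_range] at hx
    rw [show (M+2)+(M+2)+x = x + 2*(M+2) by ring,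
      Nat.add_mul_div_right _ _ (show 0 < M+2 by omega), Nat.div_eq_of_lt hx,
      Nat.cast_mul, Nat.cast_sub (by omega)]
    push_cast
    ring
  have hB3 : (((∑ x ∈ range (M+2), (6*M+10 - ((M+2)+(M+2)+(M+2)+x)) * (((M+2)+(M+2)+(M+2)+x) + 2 + ((M+2)+(M+2)+(M+2)+x)/(M+2))) : ℕ) : ℤ)
      = ∑ x ∈ range (M+2), ((9*(M:ℤ)^2+45*(M:ℤ)+44) + (-7) * (x:ℤ) + (-1) * (x:ℤ)^2) := by
    rw [Nat.cast_sum]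
    apply Finset.sum_congr rfl
    intro x hx
    rw [Finset.mem_range] at hx
    rw [show (M+2)+(M+2)+(M+2)+x = x + 3*(M+2) by ring,
      Nat.add_mul_div_right _ _ (show 0 < M+2 by omega), Nat.div_eq_of_lt hx,
      Nat.cast_mul, Nat.cast_sub (by omega)]
    push_cast
    ring
  have hB4 : (((∑ x ∈ range (M+2), (6*M+10 - ((M+2)+(M+2)+(M+2)+(M+2)+x)) * (((M+2)+(M+2)+(M+2)+(M+2)+x) + 2 + ((M+2)+(M+2)+(M+2)+(M+2)+x)/(M+2))) : ℕ) : ℤ)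
      = ∑ x ∈ range (M+2), ((8*(M:ℤ)^2+36*(M:ℤ)+28) + (-2*(M:ℤ)-12) * (x:ℤ) + (-1) * (x:ℤ)^2) := by
    rw [Nat.cast_sum]
    apply Finset.sum_congr rfl
    intro x hx
    rw [Finset.mem_range] at hx
    rw [show (M+2)+(M+2)+(M+2)+(M+2)+x = x + 4*(M+2) by ring,
      Nat.add_mul_div_right _ _ (show 0 < M+2 by omega), Nat.div_eq_of_lt hx,
      Nat.cast_mul, Nat.cast_sub (by omega)]
    push_cast
    ring
  have hB5 : (((∑ x ∈ range (M+2), (6*M+10 - ((M+2)+(M+2)+(M+2)+(M+2)+(M+2)+x)) * (((M+2)+(M+2)+(M+2)+(M+2)+(M+2)+x) + 2 + ((M+2)+(M+2)+(M+2)+(M+2)+(M+2)+x)/(M+2))) : ℕ) : ℤ)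
      = ∑ x ∈ range (M+1), ((5*(M:ℤ)^2+17*(M:ℤ)) + (-4*(M:ℤ)-17) * (x:ℤ) + (-1) * (x:ℤ)^2) := by
    rw [congrArg range (by omega : M+2 = M+1+1), Finset.sum_range_succ,
      Nat.sub_eq_zero_of_le (show 6*M+10 ≤ (M+2)+(M+2)+(M+2)+(M+2)+(M+2)+(M+1) by omega),
      Nat.zero_mul, Nat.add_zero, Nat.cast_sum]
    apply Finset.sum_congr rfl
    intro x hx
    rw [Finset.mem_range] at hx
    rw [show (M+2)+(M+2)+(M+2)+(M+2)+(M+2)+x = x + 5*(M+2) by ring,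
      Nat.add_mul_div_right _ _ (show 0 < M+2 by omega), Nat.div_eq_of_lt (by omega),
      Nat.cast_mul, Nat.cast_sub (by omega)]
    push_cast
    ring
  -- expand the Icc 1 6 sum
  rw [show (Finset.Icc 1 6 : Finset ℕ) = {1,2,3,4,5,6} by rfl]
  rw [Finset.sum_insert (by decide), Finset.sum_insert (by decide), Finset.sum_insert (by decide),
    Finset.sum_insert (by decide), Finset.sum_insert (by decide), Finset.sum_singleton]
  simp only [show 1*(M+2)-1 = M+1 by omega, show 2*(M+2)-1 = 2*M+3 by omega,
    show 3*(M+2)-1 = 3*M+5 by omega, show 4*(M+2)-1 = 4*M+7 by omega,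
    show 5*(M+2)-1 = 5*M+9 by omega, show 6*(M+2)-1 = 6*M+11 by omega]
  -- choose facts
  have hc3 : ((6*M+12).choose 3 : ℤ) * 6 = (6*(M:ℤ)+12)*(6*(M:ℤ)+11)*(6*(M:ℤ)+10) := by
    have h := choose3 (6*M+12)
    rw [show 6*M+12-1 = 6*M+11 by omega, show 6*M+12-2 = 6*M+10 by omega] at h
    have h' : (6*M+12).choose 3 * 6 = (6*M+12)*(6*M+11)*(6*M+10) := by rw [Nat.mul_comm]; exact h
    exact_mod_cast h'
  have hk1 : 2 * ((M+1).choose 2 : ℤ) = ((M:ℤ)+1)*(M:ℤ) := by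
    have h := choose2 (M+1); rw [show M+1-1 = M by omega] at h; exact_mod_cast h
  have hk2 : 2 * ((2*M+3).choose 2 : ℤ) = (2*(M:ℤ)+3)*(2*(M:ℤ)+2) := by
    have h := choose2 (2*M+3); rw [show 2*M+3-1 = 2*M+2 by omega] at h; exact_mod_cast h
  have hk3 : 2 * ((3*M+5).choose 2 : ℤ) = (3*(M:ℤ)+5)*(3*(M:ℤ)+4) := by
    have h := choose2 (3*M+5); rw [show 3*M+5-1 = 3*M+4 by omega] at h; exact_mod_cast h
  have hk4 : 2 * ((4*M+7).choose 2 : ℤ) = (4*(M:ℤ)+7)*(4*(M:ℤ)+6) := by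
    have h := choose2 (4*M+7); rw [show 4*M+7-1 = 4*M+6 by omega] at h; exact_mod_cast h
  have hk5 : 2 * ((5*M+9).choose 2 : ℤ) = (5*(M:ℤ)+9)*(5*(M:ℤ)+8) := by
    have h := choose2 (5*M+9); rw [show 5*M+9-1 = 5*M+8 by omega] at h; exact_mod_cast h
  have hk6 : 2 * ((6*M+11).choose 2 : ℤ) = (6*(M:ℤ)+11)*(6*(M:ℤ)+10) := by
    have h := choose2 (6*M+11); rw [show 6*M+11-1 = 6*M+10 by omega] at h; exact_mod_cast h
  apply Nat.cast_injective (R := ℤ)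
  simp only [Nat.cast_add]
  rw [hB0, hB1, hB2, hB3, hB4, hB5]
  apply mul_left_cancel₀ (show (6:ℤ) ≠ 0 by norm_num)
  simp only [mul_add]
  rw [sumquad, sumquad, sumquad, sumquad, sumquad, sumquad]
  push_cast
  linear_combination -hc3 - 3*hk1 - 3*hk2 - 3*hk3 - 3*hk4 - 3*hk5 - 3*hk6

theorem stmt13 (m : ℕ) (hm : 0 < m) :
    (∑ s ∈ Finset.Icc 1 (6 * m - 1 - 1), s * (((m + 1) * (6 * m - 1 - s) + (m - 1)) / m)) =
      (6 * m - 1 + 1).choose 3 + ∑ k ∈ Finset.Icc 1 6, (k * m - 1).choose 2 := by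
  match m, hm with
  | 1, _ => decide
  | (M+2), _ => exact main M
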